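/- Let (X, μ) be a finite measure space, m₁ a Young function, and m a Young function differentiable on (0,∞) with convex conjugate m*. For each θ ∈ (0,1] let v_θ : X → ℝ^d be measurable, and suppose there are constants C₁, C₂ (independent of θ) with ∫_X m₁(|v_θ|) dμ ≤ C₁ and θ·∫_X m*(m'(|v_θ|)) dμ ≤ C₂ for all θ ∈ (0,1]. Then for every bounded measurable φ : X → ℝ^d, lim_{θ→0⁺} ∫_X θ·∇_ξ m(|v_θ(x)|)·φ(x) dμ = 0, where ∇_ξ m(|v|) = m'(|v|)·v/|v| for v ≠ 0 and ∇_ξ m(0) = 0. -/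

import Mathlib

open Filter Set MeasureTheory Topology Classical

/-- A Young function: `m : [0,∞) → [0,∞)` with `m(s) = 0 ↔ s = 0`, convex,
and superlinear: `m(s)/s → 0` as `s → 0⁺` and `m(s)/s → ∞` as `s → ∞`. -/
def IsYoung (m : ℝ → ℝ) : Prop :=
  (∀ s, 0 ≤ s → 0 ≤ m s) ∧
  (∀ s, 0 ≤ s → (m s = 0 ↔ s = 0)) ∧
  ConvexOn ℝ (Set.Ici 0) m ∧
  Tendsto (fun s => m s / s) (nhdsWithin 0 (Set.Ioi 0)) (nhds 0) ∧
  Tendsto (fun s => m s / s) atTop atTop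

/-- The convex conjugate `m*(s) = sup_{t ∈ [0,∞)} (s·t − m(t))`. -/
noncomputable def youngConj (m : ℝ → ℝ) (s : ℝ) : ℝ :=
  sSup ((fun t => s * t - m t) '' Set.Ici 0)

/-- `∇_ξ m(|v|) = m'(|v|)·v/|v|` for `v ≠ 0`, and `0` for `v = 0`. -/

noncomputable def gradYoung {d : ℕ} (m' : ℝ → ℝ) (v : EuclideanSpace ℝ (Fin d)) :
    EuclideanSpace ℝ (Fin d) :=
  if v = 0 then 0 else (m' ‖v‖ / ‖v‖) • v

lemma young_bddAbove {m : ℝ → ℝ} (hnn : ∀ s, 0 ≤ s → 0 ≤ m s)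
    (htop : Tendsto (fun s => m s / s) atTop atTop) (s : ℝ) :
    BddAbove ((fun t => s * t - m t) '' Set.Ici 0) := by
  obtain ⟨T, hT⟩ := eventually_atTop.1 (htop.eventually_ge_atTop |s|)
  refine ⟨max (|s| * max T 1) 0, ?_⟩
  rintro y ⟨t, ht, rfl⟩
  simp only [mem_Ici] at ht
  by_cases htT : t ≤ max T 1
  · have h1 : s * t ≤ |s| * t := mul_le_mul_of_nonneg_right (le_abs_self s) ht
    have h2 : |s| * t ≤ |s| * max T 1 := mul_le_mul_of_nonneg_left htT (abs_nonneg s)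
    have h3 : 0 ≤ m t := hnn t ht
    refine le_trans ?_ (le_max_left _ _)
    show s * t - m t ≤ _
    linarith
  · push_neg at htT
    have htpos : (0:ℝ) < t := lt_of_lt_of_le (lt_of_lt_of_le one_pos (le_max_right T 1)) htT.le
    have h1 : |s| ≤ m t / t := hT t ((le_max_left T 1).trans htT.le)
    have h2 : |s| * t ≤ m t := (le_div_iff₀ htpos).1 h1
    have h3 : s * t ≤ |s| * t := mul_le_mul_of_nonneg_right (le_abs_self s) ht
    refine le_trans ?_ (le_max_right _ _)
    show s * t - m t ≤ _
    linarith

lemma youngConj_ge {m : ℝ → ℝ} (hnn : ∀ s, 0 ≤ s → 0 ≤ m s)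
    (htop : Tendsto (fun s => m s / s) atTop atTop) (s t : ℝ) (ht : 0 ≤ t) :
    s * t - m t ≤ youngConj m s :=
  le_csSup (young_bddAbove hnn htop s) (mem_image_of_mem _ ht)

lemma youngConj_nonneg {m : ℝ → ℝ} (hnn : ∀ s, 0 ≤ s → 0 ≤ m s)
    (htop : Tendsto (fun s => m s / s) atTop atTop) (hm0 : m 0 = 0) (s : ℝ) :
    0 ≤ youngConj m s := by
  have h := youngConj_ge hnn htop s 0 le_rfl
  simpa [hm0] using h

lemma deriv_nonneg_aux {m : ℝ → ℝ} (hconv : ConvexOn ℝ (Set.Ici 0) m)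
    (hnn : ∀ s, 0 ≤ s → 0 ≤ m s) (hm00 : m 0 = 0) {r d : ℝ} (hr : 0 < r)
    (hd : HasDerivAt m d r) : 0 ≤ d := by
  have hmono : ∀ a b : ℝ, 0 ≤ a → a ≤ b → m a ≤ m b := by
    intro a b ha hab
    rcases eq_or_lt_of_le (ha.trans hab) with hb | hb
    · have ha0 : a = 0 := le_antisymm (hab.trans hb.symm.le) ha
      rw [ha0, ← hb]
    · have ht0 : 0 ≤ a / b := div_nonneg ha hb.le
      have ht1 : a / b ≤ 1 := (div_le_one hb).mpr hab
      have := hconv.2 (Set.self_mem_Ici (a := (0:ℝ))) (Set.mem_Ici.mpr hb.le)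
        (sub_nonneg.mpr ht1) ht0 (by ring)
      simp only [smul_eq_mul, mul_zero, zero_add] at this
      rw [div_mul_cancel₀ _ hb.ne'] at this
      have hmb : 0 ≤ m b := hnn b hb.le
      rw [hm00] at this
      nlinarith [mul_le_mul_of_nonneg_right ht1 hmb]
  have hs := hasDerivAt_iff_tendsto_slope.mp hd
  have hsub : Set.Ioi r ⊆ {r}ᶜ := fun y hy => (ne_of_gt hy)
  refine ge_of_tendsto (hs.mono_left (nhdsWithin_mono _ hsub)) ?_
  filter_upwards [self_mem_nhdsWithin] with y hy
  rw [slope_def_field]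
  exact div_nonneg (sub_nonneg.2 (hmono r y hr.le (le_of_lt hy)))
    (sub_nonneg.2 (le_of_lt hy))

set_option maxHeartbeats 1000000 in
/-- The regularizing term vanishes in the limit: if `∫ m₁(|v_θ|) dμ ≤ C₁` and
`θ·∫ m*(m'(|v_θ|)) dμ ≤ C₂` uniformly in `θ ∈ (0,1]`, then for every bounded measurable
`φ`, `∫ θ·∇_ξ m(|v_θ|)·φ dμ → 0` as `θ → 0⁺`. -/
theorem regularization_term_vanishes {d : ℕ} {X : Type*} [MeasurableSpace X]
    (μ : Measure X) [IsFiniteMeasure μ]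
    (m₁ m m' : ℝ → ℝ) (h₁ : IsYoung m₁) (hm : IsYoung m)
    (hderiv : ∀ r : ℝ, 0 < r → HasDerivAt m (m' r) r)
    (v : ℝ → X → EuclideanSpace ℝ (Fin d))
    (hv : ∀ θ ∈ Set.Ioc (0 : ℝ) 1, Measurable (v θ))
    (C₁ C₂ : ℝ)
    (hb1 : ∀ θ ∈ Set.Ioc (0 : ℝ) 1,
      ∫⁻ x, ENNReal.ofReal (m₁ ‖v θ x‖) ∂μ ≤ ENNReal.ofReal C₁)
    (hb2 : ∀ θ ∈ Set.Ioc (0 : ℝ) 1,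
      ENNReal.ofReal θ * ∫⁻ x, ENNReal.ofReal (youngConj m (m' ‖v θ x‖)) ∂μ
        ≤ ENNReal.ofReal C₂)
    (φ : X → EuclideanSpace ℝ (Fin d)) (hφm : Measurable φ)
    (B : ℝ) (hφb : ∀ x, ‖φ x‖ ≤ B) :
    Tendsto (fun θ : ℝ => ∫ x, θ * (@inner ℝ _ _ (gradYoung m' (v θ x)) (φ x)) ∂μ)
      (𝓝[>] 0) (𝓝 0) := by
  classical
  obtain ⟨hmnn, hmz, hmconv, -, hmtop⟩ := hm
  have hm0 : m 0 = 0 := (hmz 0 le_rfl).mpr rfl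
  set B' : ℝ := max B 0 with hB'def
  have hB'nn : 0 ≤ B' := le_max_right _ _
  have hφB' : ∀ x, ‖φ x‖ ≤ B' := fun x => (hφb x).trans (le_max_left _ _)
  set C' : ℝ := max C₂ 0 with hC'def
  have hC'nn : 0 ≤ C' := le_max_right _ _
  rw [NormedAddCommGroup.tendsto_nhds_zero]
  intro ε hε
  set P : ℝ := B' * C' with hPdef
  have hPnn : 0 ≤ P := mul_nonneg hB'nn hC'nn
  set δ : ℝ := ε / (2 * (P + 1)) with hδdef
  have hδ : 0 < δ := by positivity
  have hδval : δ * (2 * (P + 1)) = ε := by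
    rw [hδdef]; field_simp
  set M : ℝ := m (1 / δ) with hMdef
  have hMnn : 0 ≤ M := hmnn _ (by positivity)
  set A : ℝ := B' * δ * M * (μ Set.univ).toReal with hAdef
  have hAnn : 0 ≤ A := by positivity
  set θ₀ : ℝ := ε / (2 * (A + 1)) with hθ₀def
  have hθ₀ : 0 < θ₀ := by positivity
  have hθ₀val : θ₀ * (2 * (A + 1)) = ε := by
    rw [hθ₀def]; field_simp
  have hbpos : 0 < min θ₀ 1 := lt_min hθ₀ one_pos
  filter_upwards [Ioo_mem_nhdsGT_of_mem (Set.left_mem_Ico.mpr hbpos)] with θ hθmem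
  obtain ⟨hθpos, hθlt⟩ := hθmem
  have hθ1 : θ ≤ 1 := (hθlt.trans_le (min_le_right _ _)).le
  have hθθ₀ : θ < θ₀ := hθlt.trans_le (min_le_left _ _)
  have hpt : ∀ x, ‖θ * (@inner ℝ _ _ (gradYoung m' (v θ x)) (φ x))‖ ≤
      θ * B' * δ * youngConj m (m' ‖v θ x‖) + θ * B' * δ * M := by
    intro x
    have hyc : 0 ≤ youngConj m (m' ‖v θ x‖) := youngConj_nonneg hmnn hmtop hm0 _
    by_cases hvx : v θ x = 0
    · have hg : gradYoung m' (v θ x) = 0 := by rw [gradYoung, if_pos hvx]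
      rw [hg]
      simp only [inner_zero_left, mul_zero, norm_zero]
      exact add_nonneg (mul_nonneg (by positivity) hyc) (by positivity)
    · have hr : 0 < ‖v θ x‖ := norm_pos_iff.mpr hvx
      have hm'nn : 0 ≤ m' ‖v θ x‖ :=
        deriv_nonneg_aux hmconv hmnn hm0 hr (hderiv _ hr)
      have hyoung : m' ‖v θ x‖ ≤ δ * youngConj m (m' ‖v θ x‖) + δ * M := by
        have h := youngConj_ge hmnn hmtop (m' ‖v θ x‖) (1 / δ) (by positivity)
        have h2 : δ * (m' ‖v θ x‖ * (1 / δ) - m (1 / δ)) ≤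
            δ * youngConj m (m' ‖v θ x‖) := mul_le_mul_of_nonneg_left h hδ.le
        rw [mul_sub] at h2
        have h3 : δ * (m' ‖v θ x‖ * (1 / δ)) = m' ‖v θ x‖ := by field_simp
        rw [h3, ← hMdef] at h2
        linarith
      have hinner : (@inner ℝ _ _ (gradYoung m' (v θ x)) (φ x)) =
          (m' ‖v θ x‖ / ‖v θ x‖) * @inner ℝ _ _ (v θ x) (φ x) := by
        rw [gradYoung, if_neg hvx, real_inner_smul_left]
      have habs : |(@inner ℝ _ _ (v θ x) (φ x))| ≤ ‖v θ x‖ * B' :=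
        (abs_real_inner_le_norm _ _).trans
          (mul_le_mul_of_nonneg_left (hφB' x) (norm_nonneg _))
      have h1 : ‖θ * (@inner ℝ _ _ (gradYoung m' (v θ x)) (φ x))‖ ≤
          θ * B' * m' ‖v θ x‖ := by
        rw [hinner, Real.norm_eq_abs, abs_mul, abs_mul, abs_of_pos hθpos,
          abs_of_nonneg (div_nonneg hm'nn hr.le)]
        have hstep : m' ‖v θ x‖ / ‖v θ x‖ * |(@inner ℝ _ _ (v θ x) (φ x))| ≤
            m' ‖v θ x‖ / ‖v θ x‖ * (‖v θ x‖ * B') :=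
          mul_le_mul_of_nonneg_left habs (div_nonneg hm'nn hr.le)
        have heq : m' ‖v θ x‖ / ‖v θ x‖ * (‖v θ x‖ * B') = B' * m' ‖v θ x‖ := by
          field_simp
        calc θ * (m' ‖v θ x‖ / ‖v θ x‖ * |(@inner ℝ _ _ (v θ x) (φ x))|)
            ≤ θ * (B' * m' ‖v θ x‖) := by
              rw [← heq]; exact mul_le_mul_of_nonneg_left hstep hθpos.le
          _ = θ * B' * m' ‖v θ x‖ := by ring
      have h2 : θ * B' * m' ‖v θ x‖ ≤
          θ * B' * (δ * youngConj m (m' ‖v θ x‖) + δ * M) :=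
        mul_le_mul_of_nonneg_left hyoung (by positivity)
      calc ‖θ * (@inner ℝ _ _ (gradYoung m' (v θ x)) (φ x))‖
          ≤ θ * B' * m' ‖v θ x‖ := h1
        _ ≤ θ * B' * (δ * youngConj m (m' ‖v θ x‖) + δ * M) := h2
        _ = θ * B' * δ * youngConj m (m' ‖v θ x‖) + θ * B' * δ * M := by ring
  have hb2' : ENNReal.ofReal θ * ∫⁻ x, ENNReal.ofReal (youngConj m (m' ‖v θ x‖)) ∂μ
      ≤ ENNReal.ofReal C' := (hb2 θ ⟨hθpos, hθ1⟩).trans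
        (ENNReal.ofReal_le_ofReal (le_max_left _ _))
  have hlint : (∫⁻ x, ENNReal.ofReal ‖θ * (@inner ℝ _ _ (gradYoung m' (v θ x)) (φ x))‖ ∂μ)
      ≤ ENNReal.ofReal (B' * δ) * ENNReal.ofReal C' +
        ENNReal.ofReal (θ * B' * δ * M) * μ Set.univ := by
    have step1 : ∀ x, ENNReal.ofReal ‖θ * (@inner ℝ _ _ (gradYoung m' (v θ x)) (φ x))‖ ≤
        ENNReal.ofReal (θ * B' * δ) * ENNReal.ofReal (youngConj m (m' ‖v θ x‖)) +
          ENNReal.ofReal (θ * B' * δ * M) := by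
      intro x
      calc ENNReal.ofReal ‖θ * (@inner ℝ _ _ (gradYoung m' (v θ x)) (φ x))‖
          ≤ ENNReal.ofReal (θ * B' * δ * youngConj m (m' ‖v θ x‖) + θ * B' * δ * M) :=
            ENNReal.ofReal_le_ofReal (hpt x)
        _ ≤ ENNReal.ofReal (θ * B' * δ * youngConj m (m' ‖v θ x‖)) +
              ENNReal.ofReal (θ * B' * δ * M) := ENNReal.ofReal_add_le
        _ = ENNReal.ofReal (θ * B' * δ) * ENNReal.ofReal (youngConj m (m' ‖v θ x‖)) +
              ENNReal.ofReal (θ * B' * δ * M) := by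
            rw [ENNReal.ofReal_mul (by positivity)]
    calc (∫⁻ x, ENNReal.ofReal ‖θ * (@inner ℝ _ _ (gradYoung m' (v θ x)) (φ x))‖ ∂μ)
        ≤ ∫⁻ x, (ENNReal.ofReal (θ * B' * δ) *
            ENNReal.ofReal (youngConj m (m' ‖v θ x‖)) +
            ENNReal.ofReal (θ * B' * δ * M)) ∂μ := lintegral_mono step1
      _ = ENNReal.ofReal (θ * B' * δ) *
            (∫⁻ x, ENNReal.ofReal (youngConj m (m' ‖v θ x‖)) ∂μ) +
            ENNReal.ofReal (θ * B' * δ * M) * μ Set.univ := by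
          rw [lintegral_add_right' _ aemeasurable_const, lintegral_const,
            lintegral_const_mul' _ _ ENNReal.ofReal_ne_top]
      _ = ENNReal.ofReal (B' * δ) * (ENNReal.ofReal θ *
            (∫⁻ x, ENNReal.ofReal (youngConj m (m' ‖v θ x‖)) ∂μ)) +
            ENNReal.ofReal (θ * B' * δ * M) * μ Set.univ := by
          have hsplit : ENNReal.ofReal (θ * B' * δ) =
              ENNReal.ofReal (B' * δ) * ENNReal.ofReal θ := by
            rw [← ENNReal.ofReal_mul (by positivity : (0:ℝ) ≤ B' * δ)]
            ring_nf
          rw [hsplit, mul_assoc]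
      _ ≤ ENNReal.ofReal (B' * δ) * ENNReal.ofReal C' +
            ENNReal.ofReal (θ * B' * δ * M) * μ Set.univ :=
          add_le_add_left (mul_le_mul_right hb2' _) _
  have hnorm := norm_integral_le_lintegral_norm
    (μ := μ) (f := fun x => θ * (@inner ℝ _ _ (gradYoung m' (v θ x)) (φ x)))
  have hRHSne : ENNReal.ofReal (B' * δ) * ENNReal.ofReal C' +
      ENNReal.ofReal (θ * B' * δ * M) * μ Set.univ ≠ ⊤ :=
    ENNReal.add_ne_top.mpr ⟨ENNReal.mul_ne_top ENNReal.ofReal_ne_top ENNReal.ofReal_ne_top,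
      ENNReal.mul_ne_top ENNReal.ofReal_ne_top (measure_ne_top μ _)⟩
  have hfinal : ‖∫ x, θ * (@inner ℝ _ _ (gradYoung m' (v θ x)) (φ x)) ∂μ‖ ≤
      B' * δ * C' + θ * B' * δ * M * (μ Set.univ).toReal := by
    refine hnorm.trans ((ENNReal.toReal_mono hRHSne hlint).trans_eq ?_)
    rw [ENNReal.toReal_add (ENNReal.mul_ne_top ENNReal.ofReal_ne_top ENNReal.ofReal_ne_top)
      (ENNReal.mul_ne_top ENNReal.ofReal_ne_top (measure_ne_top μ _)),
      ENNReal.toReal_mul, ENNReal.toReal_mul,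
      ENNReal.toReal_ofReal (by positivity : (0:ℝ) ≤ B' * δ),
      ENNReal.toReal_ofReal hC'nn,
      ENNReal.toReal_ofReal (by positivity : (0:ℝ) ≤ θ * B' * δ * M)]
  refine lt_of_le_of_lt hfinal ?_
  have e1 : B' * δ * C' = δ * P := by rw [hPdef]; ring
  have e2 : θ * B' * δ * M * (μ Set.univ).toReal = θ * A := by rw [hAdef]; ring
  rw [e1, e2]
  have h1 : δ * P < ε / 2 := by nlinarith
  have h2 : θ * A < ε / 2 := by
    have hθA : θ * A ≤ θ₀ * A := mul_le_mul_of_nonneg_right hθθ₀.le hAnn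
    have hA2 : θ₀ * A < ε / 2 := by nlinarith
    linarith
  linarith
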